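/- arXiv:1201.3565 — 2 statements merged into one kernel-verified Lean document; each statement's English description precedes it below -/
import Mathlib

section
/- For every invertible real n×n matrix A, the difference between dist(Id + A, SO(n)) and the Frobenius norm of the symmetric part (A + Aᵀ)/2 is bounded by C·min(|A|, |A|²) for some constant C depending only on n, where dist is measured in Frobenius norm and |·| is the Frobenius norm. -/
open Matrix

/-- Frobenius norm of a real square matrix. -/
noncomputable def frob {n : ℕ} (A : Matrix (Fin n) (Fin n) ℝ) : ℝ :=
  Real.sqrt (∑ i, ∑ j, (A i j) ^ 2)

/-- The special orthogonal group `SO(n)` as a set of matrices. -/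
def SOset (n : ℕ) : Set (Matrix (Fin n) (Fin n) ℝ) :=
  {Q | Qᵀ * Q = 1 ∧ Q.det = 1}

/-- Frobenius distance from a matrix to `SO(n)`. -/
noncomputable def distSO {n : ℕ} (A : Matrix (Fin n) (Fin n) ℝ) : ℝ :=
  sInf ((fun Q => frob (A - Q)) '' SOset n)

section Aux

open NormedSpace Nat

/-- Remainder bound for the exponential in a Banach algebra. -/
lemma exp_remainder {𝔸 : Type*} [NormedRing 𝔸] [NormedAlgebra ℝ 𝔸] [CompleteSpace 𝔸] (x : 𝔸) :
    ‖exp x - 1 - x‖ ≤ ‖x‖ ^ 2 * Real.exp ‖x‖ := by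
  have h := exp_series_hasSum_exp' (𝕂 := ℝ) x
  have h2 : HasSum (fun k : ℕ => (((k + 2)! : ℝ)⁻¹) • x ^ (k + 2)) (exp x - 1 - x) := by
    have := (hasSum_nat_add_iff' (f := fun k : ℕ => ((k ! : ℝ)⁻¹) • x ^ k) 2).mpr h
    simpa [Finset.sum_range_succ, sub_sub] using this
  have hsum : Summable (fun k : ℕ => ‖x‖ ^ 2 * (‖x‖ ^ k / k !)) :=
    (Real.summable_pow_div_factorial ‖x‖).mul_left _
  have hb : ∀ k : ℕ, ‖(((k + 2)! : ℝ)⁻¹) • x ^ (k + 2)‖ ≤ ‖x‖ ^ 2 * (‖x‖ ^ k / k !) := by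
    intro k
    rw [norm_smul]
    have h1 : ‖x ^ (k + 2)‖ ≤ ‖x‖ ^ (k + 2) := norm_pow_le' x (by omega)
    have h3 : ‖(((k + 2)! : ℝ))⁻¹‖ = (((k + 2)! : ℝ))⁻¹ := by
      rw [Real.norm_eq_abs, abs_of_nonneg]; positivity
    rw [h3]
    calc (((k + 2)! : ℝ))⁻¹ * ‖x ^ (k + 2)‖ ≤ ((k ! : ℝ))⁻¹ * ‖x‖ ^ (k + 2) := by
          apply mul_le_mul _ h1 (norm_nonneg _) (by positivity)
          apply inv_anti₀ (by positivity)
          exact_mod_cast Nat.factorial_le (by omega)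
      _ = ‖x‖ ^ 2 * (‖x‖ ^ k / k !) := by rw [pow_add]; ring
  have hsn : Summable (fun k : ℕ => ‖(((k + 2)! : ℝ)⁻¹) • x ^ (k + 2)‖) :=
    Summable.of_nonneg_of_le (fun k => norm_nonneg _) hb hsum
  calc ‖exp x - 1 - x‖ = ‖∑' k : ℕ, (((k + 2)! : ℝ)⁻¹) • x ^ (k + 2)‖ := by rw [h2.tsum_eq]
    _ ≤ ∑' k : ℕ, ‖(((k + 2)! : ℝ)⁻¹) • x ^ (k + 2)‖ := norm_tsum_le_tsum_norm hsn
    _ ≤ ∑' k : ℕ, ‖x‖ ^ 2 * (‖x‖ ^ k / k !) := Summable.tsum_le_tsum hb hsn hsum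
    _ = ‖x‖ ^ 2 * Real.exp ‖x‖ := by
        rw [tsum_mul_left, Real.exp_eq_exp_ℝ, exp_eq_tsum_div]

attribute [local instance] Matrix.frobeniusNormedAddCommGroup Matrix.frobeniusNormedSpace
  Matrix.frobeniusNormedRing Matrix.frobeniusNormedAlgebra

variable {n : ℕ}

lemma frob_eq_norm (A : Matrix (Fin n) (Fin n) ℝ) : frob A = ‖A‖ := by
  rw [frob, Matrix.frobenius_norm_def, Real.sqrt_eq_rpow]
  congr 1
  simp [sq_abs]

lemma norm_sym_le (M : Matrix (Fin n) (Fin n) ℝ) : ‖((1:ℝ)/2) • (M + Mᵀ)‖ ≤ ‖M‖ := by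
  rw [norm_smul]
  have : ‖M + Mᵀ‖ ≤ ‖M‖ + ‖Mᵀ‖ := norm_add_le _ _
  rw [Matrix.frobenius_norm_transpose] at this
  have hh : ‖((1:ℝ)/2)‖ = 1/2 := by rw [Real.norm_eq_abs]; norm_num
  rw [hh]
  linarith [norm_nonneg M]

lemma one_mem_SO : (1 : Matrix (Fin n) (Fin n) ℝ) ∈ SOset n := by
  constructor <;> simp [SOset]

lemma distSO_nonneg (M : Matrix (Fin n) (Fin n) ℝ) : 0 ≤ distSO M := by
  apply le_csInf ⟨_, Set.mem_image_of_mem _ one_mem_SO⟩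
  rintro y ⟨Q, _, rfl⟩
  exact Real.sqrt_nonneg _

lemma distSO_le (M : Matrix (Fin n) (Fin n) ℝ) {Q : Matrix (Fin n) (Fin n) ℝ}
    (hQ : Q ∈ SOset n) : distSO M ≤ ‖M - Q‖ := by
  rw [← frob_eq_norm]
  exact csInf_le ⟨0, by rintro y ⟨R, _, rfl⟩; exact Real.sqrt_nonneg _⟩
    (Set.mem_image_of_mem _ hQ)

lemma le_distSO (M : Matrix (Fin n) (Fin n) ℝ) {c : ℝ}
    (h : ∀ Q ∈ SOset n, c ≤ ‖M - Q‖) : c ≤ distSO M := by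
  apply le_csInf ⟨_, Set.mem_image_of_mem _ one_mem_SO⟩
  rintro y ⟨Q, hQ, rfl⟩
  dsimp only
  rw [frob_eq_norm]
  exact h Q hQ

open NormedSpace in
lemma exp_skew_mem_SO (W : Matrix (Fin n) (Fin n) ℝ) (hW : Wᵀ = -W) :
    exp W ∈ SOset n := by
  have horth : (exp W)ᵀ * exp W = 1 := by
    rw [← Matrix.exp_transpose, hW, ← Matrix.exp_add_of_commute (-W) W (Commute.neg_left rfl)]
    simp
  refine ⟨horth, ?_⟩
  have hdet2 : det (exp W) * det (exp W) = 1 := by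
    have := congrArg det horth
    rwa [det_mul, det_transpose, det_one] at this
  have hsq : exp W = exp (((1:ℝ)/2) • W) * exp (((1:ℝ)/2) • W) := by
    rw [← Matrix.exp_add_of_commute _ _ rfl, ← add_smul]
    norm_num
  have hpos : 0 ≤ det (exp W) := by
    rw [hsq, det_mul]
    exact mul_self_nonneg _
  nlinarith

lemma sym_sq_of_SO {Q : Matrix (Fin n) (Fin n) ℝ} (hQ : Q ∈ SOset n) :
    ‖((1:ℝ)/2) • ((Q - 1) + (Q - 1)ᵀ)‖ ≤ ((1:ℝ)/2) * ‖Q - 1‖ ^ 2 := by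
  have hid : (Q - 1) + (Q - 1)ᵀ = -((Q - 1)ᵀ * (Q - 1)) := by
    have h1 : (Q - 1)ᵀ * (Q - 1) = Qᵀ * Q - Qᵀ - Q + 1 := by
      rw [transpose_sub, transpose_one, Matrix.sub_mul, Matrix.mul_sub, Matrix.mul_sub]
      simp only [Matrix.one_mul, Matrix.mul_one]
      abel
    rw [h1, hQ.1, transpose_sub, transpose_one]
    abel
  rw [hid, norm_smul]
  have hh : ‖((1:ℝ)/2)‖ = 1/2 := by rw [Real.norm_eq_abs]; norm_num
  rw [hh, norm_neg]
  have h2 : ‖(Q - 1)ᵀ * (Q - 1)‖ ≤ ‖(Q - 1)ᵀ‖ * ‖Q - 1‖ := norm_mul_le _ _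
  rw [Matrix.frobenius_norm_transpose] at h2
  nlinarith [norm_nonneg (Q - 1)]

lemma lower_bound (A : Matrix (Fin n) (Fin n) ℝ) :
    ‖((1:ℝ)/2) • (A + Aᵀ)‖ - 2 * ‖A‖ ^ 2 ≤ distSO (1 + A) := by
  apply le_distSO
  intro Q hQ
  set E := Q - 1 with hE
  have hME : (1 : Matrix (Fin n) (Fin n) ℝ) + A - Q = A - E := by rw [hE]; abel
  rw [hME]
  have hsymlin : ((1:ℝ)/2) • ((A - E) + (A - E)ᵀ)
      = ((1:ℝ)/2) • (A + Aᵀ) - ((1:ℝ)/2) • (E + Eᵀ) := by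
    rw [transpose_sub]
    module
  have h1 : ‖((1:ℝ)/2) • ((A - E) + (A - E)ᵀ)‖ ≤ ‖A - E‖ := norm_sym_le _
  rw [hsymlin] at h1
  have h2 : ‖((1:ℝ)/2) • (A + Aᵀ)‖ - ‖((1:ℝ)/2) • (E + Eᵀ)‖
      ≤ ‖((1:ℝ)/2) • (A + Aᵀ) - ((1:ℝ)/2) • (E + Eᵀ)‖ := norm_sub_norm_le _ _
  have h3 : ‖((1:ℝ)/2) • (E + Eᵀ)‖ ≤ ((1:ℝ)/2) * ‖E‖ ^ 2 := sym_sq_of_SO hQ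
  by_cases hc : ‖E‖ ≤ 2 * ‖A‖
  · nlinarith [norm_nonneg E, norm_nonneg A]
  · push_neg at hc
    have h4 : ‖E‖ - ‖A‖ ≤ ‖A - E‖ := by
      have := norm_sub_norm_le E A
      rwa [← norm_neg (E - A), neg_sub] at this
    have h5 : ‖((1:ℝ)/2) • (A + Aᵀ)‖ ≤ ‖A‖ := norm_sym_le A
    nlinarith [sq_nonneg ‖A‖]

open NormedSpace in
lemma upper_bound (A : Matrix (Fin n) (Fin n) ℝ) :
    distSO (1 + A) ≤ ‖((1:ℝ)/2) • (A + Aᵀ)‖ + ‖A‖ ^ 2 * Real.exp ‖A‖ := by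
  set W := ((1:ℝ)/2) • (A - Aᵀ) with hWdef
  have hWskew : Wᵀ = -W := by
    rw [hWdef, transpose_smul, transpose_sub, transpose_transpose]
    module
  have hWQ := exp_skew_mem_SO W hWskew
  have hWn : ‖W‖ ≤ ‖A‖ := by
    rw [hWdef, norm_smul]
    have : ‖A - Aᵀ‖ ≤ ‖A‖ + ‖Aᵀ‖ := norm_sub_le _ _
    rw [Matrix.frobenius_norm_transpose] at this
    have hh : ‖((1:ℝ)/2)‖ = 1/2 := by rw [Real.norm_eq_abs]; norm_num
    rw [hh]
    linarith [norm_nonneg A]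
  have hkey : (1 : Matrix (Fin n) (Fin n) ℝ) + A - exp W
      = ((1:ℝ)/2) • (A + Aᵀ) - (exp W - 1 - W) := by
    have hA : (1 : Matrix (Fin n) (Fin n) ℝ) + A
        = ((1:ℝ)/2) • (A + Aᵀ) + W + 1 := by
      rw [hWdef]; module
    rw [hA]; abel
  calc distSO (1 + A) ≤ ‖(1 : Matrix (Fin n) (Fin n) ℝ) + A - exp W‖ := distSO_le _ hWQ
    _ ≤ ‖((1:ℝ)/2) • (A + Aᵀ)‖ + ‖exp W - 1 - W‖ := by rw [hkey]; exact norm_sub_le _ _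
    _ ≤ ‖((1:ℝ)/2) • (A + Aᵀ)‖ + ‖W‖ ^ 2 * Real.exp ‖W‖ := by
        exact add_le_add_right (exp_remainder W) _
    _ ≤ ‖((1:ℝ)/2) • (A + Aᵀ)‖ + ‖A‖ ^ 2 * Real.exp ‖A‖ := by
        have := Real.exp_le_exp.mpr hWn
        have h2 : ‖W‖ ^ 2 ≤ ‖A‖ ^ 2 := by nlinarith [norm_nonneg W]
        nlinarith [Real.exp_pos ‖W‖, sq_nonneg ‖W‖]

end Aux

/-- for every invertible real `n×n` matrix `A`, the difference between
`dist(Id + A, SO(n))` and the Frobenius norm of the symmetric part `(A + Aᵀ)/2` is bounded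
by `C·min(|A|, |A|²)`, with `C` depending only on `n`. -/
theorem stmt0 (n : ℕ) :
    ∃ C : ℝ, 0 < C ∧ ∀ A : Matrix (Fin n) (Fin n) ℝ, IsUnit A.det →
      |distSO (1 + A) - frob (((1 : ℝ) / 2) • (A + Aᵀ))| ≤
        C * min (frob A) ((frob A) ^ 2) := by
  letI := Matrix.frobeniusNormedAddCommGroup (α := ℝ) (m := Fin n) (n := Fin n)
  refine ⟨Real.exp 1 + 2, by positivity, fun A _ => ?_⟩
  rw [frob_eq_norm, frob_eq_norm]
  set a := ‖A‖ with ha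
  set s := ‖((1:ℝ)/2) • (A + Aᵀ)‖ with hs
  set d := distSO (1 + A) with hd
  have ha0 : 0 ≤ a := norm_nonneg _
  have hs0 : 0 ≤ s := norm_nonneg _
  have h1 : 0 ≤ d := distSO_nonneg _
  have h2 : d ≤ a := by
    have := distSO_le ((1 : Matrix (Fin n) (Fin n) ℝ) + A) one_mem_SO
    simpa using this
  have h3 : s ≤ a := norm_sym_le A
  have h4 : s - 2 * a ^ 2 ≤ d := lower_bound A
  have h5 : d ≤ s + a ^ 2 * Real.exp a := upper_bound A
  have he1 : (1:ℝ) ≤ Real.exp 1 := by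
    rw [Real.one_le_exp_iff]; norm_num
  by_cases hc : a ≤ 1
  · rw [min_eq_right (by nlinarith : a ^ 2 ≤ a)]
    have he : Real.exp a ≤ Real.exp 1 := Real.exp_le_exp.mpr hc
    rw [abs_le]
    constructor <;> nlinarith [sq_nonneg a, Real.exp_pos a]
  · push_neg at hc
    rw [min_eq_left (by nlinarith : a ≤ a ^ 2)]
    rw [abs_le]
    constructor <;> nlinarith
end

section
/- Let q : TM|_S → ℝⁿ be a W^{1,2}-section of orthogonal maps along a submanifold S ⊂ M (q*e = g fiberwise almost everywhere, where e is the Euclidean metric), with tangential part q^∥ = q∘ι^∥ satisfying q^∥ = dF for some F. Then the identity (∇_a q_u^α)(q⁻¹)_α^b = e_{αγ} g^{bc} (∇_c q_u^α) q^γ_a holds (in index notation, a,b,c tangential indices, u normal index, α,β,γ indices on ℝⁿ); equivalently, for tangent vectors X, Y and a normal vector ξ: ⟨(∇_X q^⊥)(ξ), q(Y)⟩ = ⟨(∇_Y q^⊥)(ξ), q(X)⟩. -/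
/-- (flat-chart formulation) let `q^∥ = dF` be the tangential part of an
orthogonal bundle map `q` along `S` (so that the normal part `q^⊥` is pointwise
orthogonal to the image of `dF`), with `F` twice differentiable.  Then by the symmetry
of the Hessian of `F` and orthogonality,
`⟨(∇_X q^⊥)(ξ), q(Y)⟩ = ⟨(∇_Y q^⊥)(ξ), q(X)⟩` for tangent vectors `X, Y` and a normal
vector `ξ` — the index identity `(∇_a q_u^α)(q⁻¹)_α^b = e_{αγ} g^{bc} (∇_c q_u^α) q^γ_a`. -/
theorem stmt14 {m n k : ℕ}
    (F : EuclideanSpace ℝ (Fin m) → EuclideanSpace ℝ (Fin n)) (hF : ContDiff ℝ 2 F)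
    (qperp : EuclideanSpace ℝ (Fin m) →
      (EuclideanSpace ℝ (Fin k) →L[ℝ] EuclideanSpace ℝ (Fin n)))
    (hq : Differentiable ℝ qperp)
    (horth : ∀ s ξ X, (inner ℝ (qperp s ξ) (fderiv ℝ F s X) : ℝ) = 0) :
    ∀ s ξ X Y,
      (inner ℝ ((fderiv ℝ qperp s X) ξ) (fderiv ℝ F s Y) : ℝ) =
      (inner ℝ ((fderiv ℝ qperp s Y) ξ) (fderiv ℝ F s X) : ℝ) := by
  intro s ξ X Y
  have hF' : Differentiable ℝ (fderiv ℝ F) :=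
    (hF.fderiv_right (m := 1) (by norm_num)).differentiable (by norm_num)
  -- key: ⟨(∇_X qperp) ξ, dF Y⟩ = - ⟨qperp ξ, (∇ dF) X Y⟩
  have key : ∀ X Y : EuclideanSpace ℝ (Fin m),
      (inner ℝ ((fderiv ℝ qperp s X) ξ) (fderiv ℝ F s Y) : ℝ) =
      - inner ℝ (qperp s ξ) ((fderiv ℝ (fderiv ℝ F) s X) Y) := by
    intro X Y
    have h1 := ((ContinuousLinearMap.apply ℝ (EuclideanSpace ℝ (Fin n))
        ξ).hasFDerivAt.comp s (hq s).hasFDerivAt)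
    have h2 := ((ContinuousLinearMap.apply ℝ (EuclideanSpace ℝ (Fin n))
        Y).hasFDerivAt.comp s (hF' s).hasFDerivAt)
    have hprod := HasFDerivAt.inner (𝕜 := ℝ) (E := EuclideanSpace ℝ (Fin n)) h1 h2
    have hzero : HasFDerivAt
        (fun t => (inner ℝ (qperp t ξ) (fderiv ℝ F t Y) : ℝ))
        (0 : EuclideanSpace ℝ (Fin m) →L[ℝ] ℝ) s := by
      have : (fun t => (inner ℝ (qperp t ξ) (fderiv ℝ F t Y) : ℝ)) = fun _ => 0 :=
        funext fun t => horth t ξ Y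
      rw [this]; exact hasFDerivAt_const 0 s
    have := hprod.unique hzero
    have happ := congrArg (fun (L : EuclideanSpace ℝ (Fin m) →L[ℝ] ℝ) => L X) this
    simp only [ContinuousLinearMap.comp_apply, ContinuousLinearMap.prod_apply,
      fderivInnerCLM_apply, ContinuousLinearMap.zero_apply,
      ContinuousLinearMap.apply_apply, Function.comp_apply] at happ
    linarith [happ]
  have hsymm : (fderiv ℝ (fderiv ℝ F) s X) Y = (fderiv ℝ (fderiv ℝ F) s Y) X :=
    (hF.contDiffAt.isSymmSndFDerivAt (by norm_num)) X Y
  rw [key X Y, key Y X, hsymm]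
end
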